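/- Let d > 1 be a squarefree integer, K = ℚ(√d) with regulator R_K. A totally positive element a = a₁ + a₂√d ∈ K (a₁, a₂ ∈ ℚ) is reduced, i.e., Tr(a) ≤ Tr(a v²) for all v ∈ O_K^×, if and only if |a₂|/a₁ ≤ tanh(R_K)/√d. -/

import Mathlib

open NumberField Module

set_option maxSynthPendingDepth 2
set_option maxHeartbeats 1000000


private lemma aux_step (α β S : ℝ) (hα : 0 < α) (hS : 1 ≤ S) (hβS : β ≤ α * S) :
    α + β ≤ α * S + β * S⁻¹ := by
  have hS0 : 0 < S := lt_of_lt_of_le one_pos hS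
  rw [← sub_nonneg]
  have h : α * S + β * S⁻¹ - (α + β) = (S - 1) * (α * S - β) * S⁻¹ := by
    field_simp
    ring
  rw [h]
  have h1 : 0 ≤ S - 1 := by linarith
  have h2 : 0 ≤ α * S - β := by linarith
  positivity

private lemma aux_nonneg (α β U : ℝ) (hα : 0 < α) (hU : 1 < U) (hβU : β ≤ α * U) (m : ℕ) :
    α + β ≤ α * U ^ m + β * (U ^ m)⁻¹ := by
  rcases Nat.eq_zero_or_pos m with h | h
  · simp [h]
  · refine aux_step α β (U ^ m) hα (one_le_pow₀ hU.le) ?_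
    calc β ≤ α * U := hβU
    _ ≤ α * U ^ m := by
        refine mul_le_mul_of_nonneg_left ?_ hα.le
        exact le_self_pow₀ hU.le h.ne'

private lemma aux_iff (α β U : ℝ) (hα : 0 < α) (hβ : 0 < β) (hU : 1 < U) :
    (∀ n : ℤ, α + β ≤ α * U ^ n + β * U ^ (-n)) ↔ β ≤ α * U ∧ α ≤ β * U := by
  have hU0 : 0 < U := lt_trans one_pos hU
  constructor
  · intro h
    have h1 := h 1
    have h2 := h (-1)
    rw [zpow_one, zpow_neg, zpow_one] at h1
    rw [neg_neg, zpow_one, zpow_neg, zpow_one] at h2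
    have hc : U⁻¹ * U = 1 := inv_mul_cancel₀ hU0.ne'
    constructor
    · nlinarith [mul_le_mul_of_nonneg_right h1 hU0.le]
    · nlinarith [mul_le_mul_of_nonneg_right h2 hU0.le]
  · rintro ⟨h1, h2⟩ n
    rcases le_or_gt 0 n with hn | hn
    · obtain ⟨m, rfl⟩ := Int.eq_ofNat_of_zero_le hn
      rw [zpow_natCast, zpow_neg, zpow_natCast]
      exact aux_nonneg α β U hα hU h1 m
    · obtain ⟨m, rfl⟩ : ∃ m : ℕ, n = -(m : ℤ) :=
        ⟨(-n).toNat, by omega⟩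
      rw [neg_neg, zpow_natCast, zpow_neg, zpow_natCast]
      have := aux_nonneg β α U hβ hU h2 m
      linarith

private lemma aux_tanh (R : ℝ) :
    Real.tanh R = (Real.exp (2 * R) - 1) / (Real.exp (2 * R) + 1) := by
  have h2 : Real.exp (2 * R) = Real.exp R * Real.exp R := by
    rw [two_mul, Real.exp_add]
  have hp := Real.exp_pos R
  rw [Real.tanh_eq_sinh_div_cosh, Real.sinh_eq, Real.cosh_eq, Real.exp_neg, h2]
  rw [div_div_div_cancel_right₀ (by norm_num : (2:ℝ) ≠ 0)]
  rw [div_eq_div_iff (by positivity) (by positivity)]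
  field_simp

private lemma aux_sq_zpow (x : ℝ) (n : ℤ) : (x ^ n) ^ 2 = (x ^ 2) ^ n := by
  rw [← zpow_natCast (x ^ n) 2, ← zpow_mul, ← zpow_natCast x 2, ← zpow_mul, mul_comm]

/-- An element of a number field is totally positive if it is positive under
every real embedding. -/
def TotPos {K : Type*} [Field K] (a : K) : Prop := ∀ τ : K →+* ℝ, 0 < τ a

theorem stmt7 (d : ℤ) (hd1 : 1 < d) (hdsf : Squarefree d)
    (K : Type*) [Field K] [NumberField K] (sq : K)
    (hsq : sq ^ 2 = (d : K)) (hdeg : finrank ℚ K = 2)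
    -- a totally positive element `a = a₁ + a₂√d`
    (a : K) (a₁ a₂ : ℚ) (haK : a = (a₁ : K) + (a₂ : K) * sq) (ha : TotPos a) :
    (∀ v : (𝓞 K)ˣ,
        Algebra.trace ℚ K a ≤ Algebra.trace ℚ K (a * ((v : 𝓞 K) : K) ^ 2)) ↔
      ((|a₂| / a₁ : ℚ) : ℝ) ≤ Real.tanh (Units.regulator K) / Real.sqrt (d : ℝ) := by
  classical
  -- `d` has no rational square root
  have hirr : ∀ q : ℚ, q ^ 2 ≠ (d : ℚ) := by
    intro q hq
    have hint : IsIntegral ℤ q := by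
      refine ⟨Polynomial.X ^ 2 - Polynomial.C d, Polynomial.monic_X_pow_sub_C _ two_ne_zero, ?_⟩
      rw [Polynomial.eval₂_sub, Polynomial.eval₂_pow, Polynomial.eval₂_X, Polynomial.eval₂_C, hq]
      simp
    obtain ⟨n, hn⟩ := IsIntegrallyClosed.isIntegral_iff.mp hint
    have hn' : (n : ℚ) = q := by rw [← hn]; simp
    have hnd : n * n = d := by
      have : ((n * n : ℤ) : ℚ) = ((d : ℤ) : ℚ) := by push_cast [hn']; linear_combination hq
      exact_mod_cast this
    have hu : IsUnit n := hdsf n (Dvd.intro 1 (by linarith))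
    rcases Int.isUnit_iff.mp hu with h | h <;> rw [h] at hnd <;> omega
  have hsqQ : ∀ q : ℚ, sq ≠ (q : K) := by
    intro q h
    refine hirr q ?_
    have : ((q : K)) ^ 2 = ((d : ℚ) : K) := by rw [← h, hsq]; push_cast; ring
    exact_mod_cast (by push_cast at this ⊢; exact_mod_cast this : ((q ^ 2 : ℚ) : K) = ((d : ℚ) : K))
  have hd0 : (0 : ℝ) < (d : ℝ) := by exact_mod_cast lt_trans one_pos hd1
  have hsq0 : sq ≠ 0 := by
    intro h
    rw [h] at hsq
    have : ((d : ℤ) : K) = 0 := by rw [← hsq]; ring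
    have : (d : ℤ) = 0 := by exact_mod_cast this
    omega
  -- `{1, sq}` is a basis of `K` over `ℚ`
  have hli : LinearIndependent ℚ ![(1 : K), sq] := by
    rw [LinearIndependent.pair_iff]
    intro s t hst
    by_contra hc
    have ht : t ≠ 0 := by
      rintro rfl
      simp only [zero_smul, add_zero, smul_eq_zero, one_ne_zero, or_false] at hst
      exact hc ⟨hst, rfl⟩
    apply hsqQ (-s / t)
    have hs : (s : K) + (t : K) * sq = 0 := by
      rw [← hst]; simp [Algebra.smul_def, eq_ratCast]
    have htK : (t : K) ≠ 0 := by exact_mod_cast ht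
    push_cast
    field_simp at hs ⊢
    linear_combination hs
  have hcard : Fintype.card (Fin 2) = finrank ℚ K := by simp [hdeg]
  have hcoord : ∀ x : K, ∃ c₁ c₂ : ℚ, x = (c₁ : K) + (c₂ : K) * sq := by
    intro x
    set B := basisOfLinearIndependentOfCardEqFinrank hli hcard with hBdef
    refine ⟨B.repr x 0, B.repr x 1, ?_⟩
    have hs := B.sum_repr x
    rw [Fin.sum_univ_two] at hs
    have h0 : B 0 = 1 := by rw [hBdef, coe_basisOfLinearIndependentOfCardEqFinrank]; rfl
    have h1 : B 1 = sq := by rw [hBdef, coe_basisOfLinearIndependentOfCardEqFinrank]; rfl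
    rw [h0, h1, Algebra.smul_def, Algebra.smul_def, eq_ratCast, eq_ratCast, mul_one] at hs
    exact hs.symm
  -- the two complex embeddings
  have hcardE : Fintype.card (K →+* ℂ) = 2 := by
    rw [NumberField.Embeddings.card K ℂ, hdeg]
  obtain ⟨φ, ψ, hφψ⟩ := Fintype.exists_pair_of_one_lt_card (by rw [hcardE]; norm_num)
  have hext : ∀ χ₁ χ₂ : K →+* ℂ, χ₁ sq = χ₂ sq → χ₁ = χ₂ := by
    intro χ₁ χ₂ h
    ext x
    obtain ⟨c₁, c₂, rfl⟩ := hcoord x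
    rw [map_add, map_add, map_mul, map_mul, map_ratCast, map_ratCast, map_ratCast, map_ratCast, h]
  have hsq2 : ∀ χ : K →+* ℂ, (χ sq) ^ 2 = ((d : ℤ) : ℂ) := by
    intro χ
    rw [← map_pow, hsq, map_intCast]
  have hopp : ψ sq = - φ sq := by
    have h0 : (φ sq - ψ sq) * (φ sq + ψ sq) = 0 := by
      linear_combination hsq2 φ - hsq2 ψ
    rcases mul_eq_zero.mp h0 with h | h
    · have h' : φ sq = ψ sq := by linear_combination h
      exact absurd (hext φ ψ h') hφψ
    · linear_combination h
  -- all embeddings are real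
  have hrealval : ∀ χ : K →+* ℂ, ComplexEmbedding.IsReal χ := by
    intro χ
    rw [NumberField.ComplexEmbedding.isReal_iff]
    ext x
    rw [NumberField.ComplexEmbedding.conjugate_coe_eq]
    obtain ⟨c₁, c₂, rfl⟩ := hcoord x
    have him : (χ sq).im = 0 := by
      have h := hsq2 χ
      rw [Complex.ext_iff] at h
      simp only [pow_two, Complex.mul_re, Complex.mul_im, Complex.intCast_re,
        Complex.intCast_im] at h
      obtain ⟨h1, h2⟩ := h
      by_contra hi
      have hre : (χ sq).re = 0 := by
        rcases mul_eq_zero.mp (by linarith : (χ sq).re * (χ sq).im = 0) with h | h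
        · exact h
        · exact absurd h hi
      rw [hre] at h1
      have hd2 : (1 : ℝ) < (d : ℤ) := by exact_mod_cast hd1
      nlinarith [sq_nonneg (χ sq).im]
    have him' : (starRingEnd ℂ) (χ sq) = χ sq := Complex.conj_eq_iff_im.mpr him
    simp only [map_add, map_mul, map_ratCast, him']
  -- the two real embeddings
  set f : K →+* ℝ := (hrealval φ).embedding with hfdef
  set g : K →+* ℝ := (hrealval ψ).embedding with hgdef
  have hfC : ∀ x : K, ((f x : ℝ) : ℂ) = φ x := fun x =>
    NumberField.ComplexEmbedding.IsReal.coe_embedding_apply (hrealval φ) x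
  have hgC : ∀ x : K, ((g x : ℝ) : ℂ) = ψ x := fun x =>
    NumberField.ComplexEmbedding.IsReal.coe_embedding_apply (hrealval ψ) x
  set s : ℝ := f sq with hsdef
  have hs2 : s ^ 2 = (d : ℝ) := by
    have : ((s ^ 2 : ℝ) : ℂ) = (((d : ℝ) : ℝ) : ℂ) := by
      push_cast
      rw [hfC]
      exact_mod_cast hsq2 φ
    exact_mod_cast this
  have hgs : g sq = -s := by
    have : ((g sq : ℝ) : ℂ) = ((-s : ℝ) : ℂ) := by
      rw [hgC, hopp, ← hfC]
      push_cast
      ring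
    exact_mod_cast this
  have hs0 : s ≠ 0 := by
    intro h
    rw [h] at hs2
    simp only [ne_eq, zero_pow, OfNat.ofNat_ne_zero, not_false_eq_true] at hs2
    exact absurd hs2.symm hd0.ne'
  have hsabs : |s| = Real.sqrt (d : ℝ) := by
    rw [← hs2, Real.sqrt_sq_eq_abs]
  -- evaluation of f and g on coordinates
  have hfeval : ∀ c₁ c₂ : ℚ, f ((c₁ : K) + (c₂ : K) * sq) = c₁ + c₂ * s := by
    intro c₁ c₂
    rw [map_add, map_mul, map_ratCast, map_ratCast, hsdef]
  have hgeval : ∀ c₁ c₂ : ℚ, g ((c₁ : K) + (c₂ : K) * sq) = c₁ - c₂ * s := by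
    intro c₁ c₂
    rw [map_add, map_mul, map_ratCast, map_ratCast, hgs]
    ring
  -- trace formula
  have huniv : (Finset.univ : Finset (K →+* ℂ)) = {φ, ψ} := by
    symm
    apply Finset.eq_univ_of_card
    rw [Finset.card_pair hφψ, hcardE]
  have htr : ∀ x : K, ((Algebra.trace ℚ K x : ℚ) : ℝ) = f x + g x := by
    intro x
    have h := trace_eq_sum_embeddings (K := ℚ) (L := K) (E := ℂ) (x := x)
    rw [← Equiv.sum_comp (RingHom.equivRatAlgHom K ℂ) (fun σ : K →ₐ[ℚ] ℂ => σ x)] at h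
    have heq : ∀ r : K →+* ℂ, (RingHom.equivRatAlgHom K ℂ r) x = r x := fun r => rfl
    simp only [heq] at h
    rw [huniv, Finset.sum_pair hφψ] at h
    apply Complex.ofReal_injective
    rw [Complex.ofReal_add, hfC, hgC, ← h, eq_ratCast (algebraMap ℚ ℂ)]
    norm_cast
  -- norm formula for units
  have hnm : ∀ v : (𝓞 K)ˣ, (f ((v : 𝓞 K) : K)) ^ 2 * (g ((v : 𝓞 K) : K)) ^ 2 = 1 := by
    intro v
    have h := Algebra.norm_eq_prod_embeddings ℚ ℂ ((v : 𝓞 K) : K)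
    rw [← Equiv.prod_comp (RingHom.equivRatAlgHom K ℂ)
      (fun σ : K →ₐ[ℚ] ℂ => σ ((v : 𝓞 K) : K))] at h
    have heq : ∀ r : K →+* ℂ, (RingHom.equivRatAlgHom K ℂ r) ((v : 𝓞 K) : K) = r ((v : 𝓞 K) : K) :=
      fun r => rfl
    simp only [heq] at h
    rw [huniv, Finset.prod_pair hφψ] at h
    have hval' : f ((v : 𝓞 K) : K) * g ((v : 𝓞 K) : K) =
        (((Algebra.norm ℚ) ((v : 𝓞 K) : K) : ℚ) : ℝ) := by
      apply Complex.ofReal_injective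
      rw [Complex.ofReal_mul, hfC, hgC, ← h, eq_ratCast (algebraMap ℚ ℂ)]
      norm_cast
    have habs : |(Algebra.norm ℚ) ((v : 𝓞 K) : K)| = 1 :=
      NumberField.isUnit_iff_norm.mp v.isUnit
    have : (f ((v : 𝓞 K) : K) * g ((v : 𝓞 K) : K)) ^ 2 = 1 := by
      rw [hval', ← Rat.cast_pow, ← sq_abs, habs]
      norm_num
    nlinarith [this]
  -- infinite places
  have hallreal : ∀ w : InfinitePlace K, w.IsReal := fun w =>
    InfinitePlace.isReal_iff.mpr (hrealval _)
  have hnc : InfinitePlace.nrComplexPlaces K = 0 :=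
    Fintype.card_eq_zero_iff.mpr
      ⟨fun w => (InfinitePlace.not_isReal_iff_isComplex.mpr w.2) (hallreal w.1)⟩
  have hcardP : Fintype.card (InfinitePlace K) = 2 := by
    have h1 := InfinitePlace.card_eq_nrRealPlaces_add_nrComplexPlaces K
    have h2 := InfinitePlace.card_add_two_mul_card_eq_rank K
    rw [hdeg] at h2
    omega
  have hrank : Units.rank K = 1 := by
    rw [Units.rank, hcardP]
  set w₁ : InfinitePlace K := InfinitePlace.mk φ with hw₁def
  set w₂ : InfinitePlace K := InfinitePlace.mk ψ with hw₂def
  have hw12 : w₁ ≠ w₂ := by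
    intro h
    rw [hw₁def, hw₂def, InfinitePlace.mk_eq_iff] at h
    rcases h with h | h
    · exact hφψ h
    · exact hφψ (by rwa [NumberField.ComplexEmbedding.isReal_iff.mp (hrealval φ)] at h)
  have hemb : ∀ χ : K →+* ℂ, χ = φ ∨ χ = ψ := by
    intro χ
    have h0 : (χ sq - φ sq) * (χ sq + φ sq) = 0 := by
      linear_combination hsq2 χ - hsq2 φ
    rcases mul_eq_zero.mp h0 with h | h
    · exact Or.inl (hext χ φ (by linear_combination h))
    · exact Or.inr (hext χ ψ (by rw [hopp]; linear_combination h))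
  have hplace : ∀ w : InfinitePlace K, w = w₁ ∨ w = w₂ := by
    intro w
    rcases hemb w.embedding with h | h
    · exact Or.inl (by rw [← InfinitePlace.mk_embedding w, h])
    · exact Or.inr (by rw [← InfinitePlace.mk_embedding w, h])
  have hw₁x : ∀ x : K, w₁ x = |f x| := by
    intro x
    rw [hw₁def, InfinitePlace.apply, ← hfC x, Complex.norm_real, Real.norm_eq_abs]
  -- the regulator
  haveI hUS : Unique {w : InfinitePlace K // w ≠ w₂} :=
    ⟨⟨⟨w₁, hw12⟩⟩, fun w => Subtype.ext (by
      rcases hplace w.1 with h | h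
      · exact h
      · exact absurd h w.2)⟩
  haveI hUF : Unique (Fin (Units.rank K)) := by rw [hrank]; infer_instance
  set e : {w : InfinitePlace K // w ≠ w₂} ≃ Fin (Units.rank K) :=
    Equiv.ofUnique _ _ with hedef
  set g0 : (𝓞 K)ˣ := Units.fundSystem K (e default) with hg0def
  set t : ℝ := f ((g0 : 𝓞 K) : K) with htdef
  have hreg : Units.regulator K = |Real.log (|t|)| := by
    rw [Units.regulator_eq_det K w₂ e, Matrix.det_unique]
    have hdd : (default : {w : InfinitePlace K // w ≠ w₂}) = ⟨w₁, hw12⟩ :=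
      Subsingleton.elim _ _
    simp only [Matrix.of_apply, hdd]
    rw [InfinitePlace.mult, if_pos (hallreal w₁), hw₁x]
    norm_num
    rw [← hdd]
  have ht0 : t ≠ 0 := by
    intro h
    have h2 := hnm g0
    rw [← htdef] at h2
    rw [h] at h2
    norm_num at h2
  set u : ℝ := t ^ 2 with hudef
  have hu0 : 0 < u := by
    rw [hudef]
    positivity
  have hginv : g ((g0 : 𝓞 K) : K) ^ 2 = u⁻¹ := by
    have h2 := hnm g0
    rw [← htdef, ← hudef] at h2
    field_simp
    linear_combination h2
  -- zpow compatibility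
  have hfz : ∀ (w : (𝓞 K)ˣ) (n : ℤ),
      f (((w ^ n : (𝓞 K)ˣ) : 𝓞 K) : K) = f ((w : 𝓞 K) : K) ^ n := by
    intro w n
    have h1 : (((w ^ n : (𝓞 K)ˣ) : 𝓞 K) : K) = (((w : 𝓞 K) : K)) ^ n := by
      set J : (𝓞 K)ˣ →* Kˣ := Units.map (algebraMap (𝓞 K) K).toMonoidHom with hJ
      have h2 : ∀ w' : (𝓞 K)ˣ, ((w' : 𝓞 K) : K) = ((J w' : Kˣ) : K) := fun _ => rfl
      rw [h2, h2, map_zpow J w n, Units.val_zpow_eq_zpow_val]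
    rw [h1, map_zpow₀]
  have hgz : ∀ (w : (𝓞 K)ˣ) (n : ℤ),
      g (((w ^ n : (𝓞 K)ˣ) : 𝓞 K) : K) = g ((w : 𝓞 K) : K) ^ n := by
    intro w n
    have h1 : (((w ^ n : (𝓞 K)ˣ) : 𝓞 K) : K) = (((w : 𝓞 K) : K)) ^ n := by
      set J : (𝓞 K)ˣ →* Kˣ := Units.map (algebraMap (𝓞 K) K).toMonoidHom with hJ
      have h2 : ∀ w' : (𝓞 K)ˣ, ((w' : 𝓞 K) : K) = ((J w' : Kˣ) : K) := fun _ => rfl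
      rw [h2, h2, map_zpow J w n, Units.val_zpow_eq_zpow_val]
    rw [h1, map_zpow₀]
  -- torsion elements have square 1 under both embeddings
  have hw₂x : ∀ x : K, w₂ x = |g x| := by
    intro x
    rw [hw₂def, InfinitePlace.apply, ← hgC x, Complex.norm_real, Real.norm_eq_abs]
  have htors : ∀ ζ : (𝓞 K)ˣ, ζ ∈ NumberField.Units.torsion K →
      f ((ζ : 𝓞 K) : K) ^ 2 = 1 ∧ g ((ζ : 𝓞 K) : K) ^ 2 = 1 := by
    intro ζ hζ
    rw [NumberField.Units.mem_torsion] at hζ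
    constructor
    · rw [← sq_abs, ← hw₁x, hζ w₁, one_pow]
    · rw [← sq_abs, ← hw₂x, hζ w₂, one_pow]
  -- every unit gives a power of u, and all powers occur
  have hdecomp : ∀ v : (𝓞 K)ˣ, ∃ n : ℤ,
      f ((v : 𝓞 K) : K) ^ 2 = u ^ n ∧ g ((v : 𝓞 K) : K) ^ 2 = u ^ (-n) := by
    intro v
    obtain ⟨⟨ζ, c⟩, hv, -⟩ := Units.exist_unique_eq_mul_prod K v
    have hed : e default = default := Subsingleton.elim _ _
    have hprod : (∏ i, Units.fundSystem K i ^ (c i)) = g0 ^ (c (e default)) := by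
      rw [Fintype.prod_unique (fun i => Units.fundSystem K i ^ (c i)), hg0def, hed]
    rw [hprod] at hv
    refine ⟨c (e default), ?_, ?_⟩
    · have : ((v : 𝓞 K) : K) = ((ζ.1 : 𝓞 K) : K) * (((g0 ^ (c (e default)) : (𝓞 K)ˣ) : 𝓞 K) : K) := by
        rw [hv]
        push_cast
        ring
      rw [this, map_mul, mul_pow, (htors ζ.1 ζ.2).1, one_mul, hfz,
        aux_sq_zpow, ← htdef, ← hudef]
    · have : ((v : 𝓞 K) : K) = ((ζ.1 : 𝓞 K) : K) * (((g0 ^ (c (e default)) : (𝓞 K)ˣ) : 𝓞 K) : K) := by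
        rw [hv]
        push_cast
        ring
      rw [this, map_mul, mul_pow, (htors ζ.1 ζ.2).2, one_mul, hgz,
        aux_sq_zpow, hginv, inv_zpow, ← zpow_neg]
  have hsurj : ∀ n : ℤ, ∃ v : (𝓞 K)ˣ,
      f ((v : 𝓞 K) : K) ^ 2 = u ^ n ∧ g ((v : 𝓞 K) : K) ^ 2 = u ^ (-n) := by
    intro n
    refine ⟨g0 ^ n, ?_, ?_⟩
    · rw [hfz, aux_sq_zpow, ← htdef, ← hudef]
    · rw [hgz, aux_sq_zpow, hginv, inv_zpow, ← zpow_neg]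
  -- positivity of the element
  have hα0 : 0 < f a := ha f
  have hβ0 : 0 < g a := ha g
  have hfa : f a = (a₁ : ℝ) + (a₂ : ℝ) * s := by rw [haK, hfeval]
  have hga : g a = (a₁ : ℝ) - (a₂ : ℝ) * s := by rw [haK, hgeval]
  have ha₁0 : (0 : ℝ) < (a₁ : ℝ) := by
    have h1 := hα0
    have h2 := hβ0
    rw [hfa] at h1
    rw [hga] at h2
    linarith
  -- the regulator and U
  set R := Units.regulator K with hRdef
  have hR0 : 0 < R := Units.regulator_pos K
  have hlogu : Real.log u = 2 * Real.log |t| := by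
    rw [hudef, Real.log_pow, ← Real.log_abs]
    push_cast
    ring
  have h2R : (2 : ℝ) * R = |Real.log u| := by
    rw [hreg, hlogu, abs_mul]
    norm_num
  set U : ℝ := Real.exp (2 * R) with hUdef
  have hcase : u = U ∨ u⁻¹ = U := by
    rcases le_total 0 (Real.log u) with h | h
    · left
      rw [hUdef, h2R, abs_of_nonneg h, Real.exp_log hu0]
    · right
      rw [hUdef, h2R, abs_of_nonpos h, ← Real.log_inv, Real.exp_log (by positivity)]
  have hU1 : 1 < U := by
    have h := Real.exp_lt_exp.mpr (show (0 : ℝ) < 2 * R by linarith)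
    rwa [Real.exp_zero] at h
  -- reduction to powers of u
  have hmain : (∀ v : (𝓞 K)ˣ,
      Algebra.trace ℚ K a ≤ Algebra.trace ℚ K (a * ((v : 𝓞 K) : K) ^ 2)) ↔
      ∀ n : ℤ, f a + g a ≤ f a * u ^ n + g a * u ^ (-n) := by
    constructor
    · intro h n
      obtain ⟨v, hv1, hv2⟩ := hsurj n
      have h2 := h v
      rw [← Rat.cast_le (K := ℝ), htr, htr, map_mul, map_pow, map_mul, map_pow,
        hv1, hv2] at h2
      linarith
    · intro h v
      obtain ⟨n, hv1, hv2⟩ := hdecomp v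
      rw [← Rat.cast_le (K := ℝ), htr, htr, map_mul, map_pow, map_mul, map_pow,
        hv1, hv2]
      have h2 := h n
      linarith
  have hmain2 : (∀ n : ℤ, f a + g a ≤ f a * u ^ n + g a * u ^ (-n)) ↔
      ∀ n : ℤ, f a + g a ≤ f a * U ^ n + g a * U ^ (-n) := by
    rcases hcase with h | h
    · rw [h]
    · have hUn : ∀ n : ℤ, U ^ n = u ^ (-n) := by
        intro n
        rw [← h, inv_zpow, zpow_neg]
      constructor
      · intro hh n
        rw [hUn n, hUn (-n), neg_neg]
        simpa using hh (-n)
      · intro hh n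
        simpa [hUn] using hh (-n)
  rw [hmain, hmain2, aux_iff (f a) (g a) U hα0 hβ0 hU1]
  -- final arithmetic
  have htanh : Real.tanh R = (U - 1) / (U + 1) := by
    rw [aux_tanh R, hUdef]
  rw [htanh, ← hsabs]
  have hcast : ((|a₂| / a₁ : ℚ) : ℝ) = |(a₂ : ℝ)| / (a₁ : ℝ) := by push_cast; rfl
  rw [hcast, hfa, hga]
  have hU0' : (0 : ℝ) < U + 1 := by linarith
  have hs0' : (0 : ℝ) < |s| := abs_pos.mpr hs0
  have habs_eq : |(a₂ : ℝ)| * ((U + 1) * |s|) = |(a₂ : ℝ) * s| * (U + 1) := by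
    rw [abs_mul]
    ring
  constructor
  · rintro ⟨h1, h2⟩
    rw [div_div, div_le_div_iff₀ ha₁0 (by positivity)]
    rw [habs_eq]
    rcases abs_cases ((a₂ : ℝ) * s) with ⟨hc, _⟩ | ⟨hc, _⟩ <;> rw [hc] <;> nlinarith
  · intro hle
    rw [div_div, div_le_div_iff₀ ha₁0 (by positivity), habs_eq] at hle
    have hb1 : (a₂ : ℝ) * s ≤ |(a₂ : ℝ) * s| := le_abs_self _
    have hb2 : -((a₂ : ℝ) * s) ≤ |(a₂ : ℝ) * s| := neg_le_abs _
    constructor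
    · nlinarith [mul_le_mul_of_nonneg_right hb2 hU0'.le]
    · nlinarith [mul_le_mul_of_nonneg_right hb1 hU0'.le]
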